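/- Let x⁺ = f(x,u) with f : ℝⁿ × ℝᵐ → ℝⁿ continuously differentiable, let ℓ₁, ℓ₂ be continuously differentiable stage costs and λ₁, λ₂ continuously differentiable functions on ℝⁿ. For μ ∈ [0,1] let ℓ_μ = μℓ₁ + (1−μ)ℓ₂, let (xᵉ_μ,uᵉ_μ) be an equilibrium (f(xᵉ_μ,uᵉ_μ) = xᵉ_μ) and ν_μ ∈ ℝⁿ a vector such that the gradient with respect to (x,u) of ℓ_μ(x,u) + ν_μᵀ(x − f(x,u)) vanishes at (xᵉ_μ,uᵉ_μ). Define λ̃_μ = ν_μ − μ∇ₓλ₁(xᵉ_μ) − (1−μ)∇ₓλ₂(xᵉ_μ), λ_μ(x) = μλ₁(x) + (1−μ)λ₂(x) + λ̃_μᵀx, and the rotated cost ℓ̃_μ(x,u) = ℓ_μ(x,u) − ℓ_μ(xᵉ_μ,uᵉ_μ) + λ_μ(x) − λ_μ(f(x,u)). Then ∇ₓλ_μ(xᵉ_μ) = ν_μ and the gradient of ℓ̃_μ with respect to (x,u) vanishes at (xᵉ_μ,uᵉ_μ): ∇_{(x,u)}ℓ̃_μ(xᵉ_μ,uᵉ_μ)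 = 0. -/

import Mathlib

open Set Bornology Matrix Filter

/-- `Vec n` is `ℝⁿ`. -/
abbrev Vec (n : ℕ) : Type := Fin n → ℝ

/-- A class `K∞` comparison function. -/
def KInf (α : ℝ → ℝ) : Prop :=
  ContinuousOn α (Ici 0) ∧ StrictMonoOn α (Ici 0) ∧ α 0 = 0 ∧
  (∀ r ∈ Ici (0 : ℝ), 0 ≤ α r) ∧ ∀ M : ℝ, ∃ r ∈ Ici (0 : ℝ), M < α r

/-- The induced state constraint set `X = {x | ∃ u, (x,u) ∈ Y}`. -/
def stateSet {n m : ℕ} (Y : Set (Vec n × Vec m)) : Set (Vec n) := {x | ∃ u, (x, u) ∈ Y}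

/-- `lam` is bounded on bounded subsets of `X`. -/
def BddOnBddSubsets {n : ℕ} (X : Set (Vec n)) (lam : Vec n → ℝ) : Prop :=
  ∀ S ⊆ X, IsBounded S → IsBounded (lam '' S)

/-- The strict dissipation inequality with supply rate `ℓ(x,u) - ℓ(xᵉ,uᵉ)`. -/
def DissIneq {n m : ℕ} (f : Vec n × Vec m → Vec n) (Y : Set (Vec n × Vec m))
    (ℓ : Vec n × Vec m → ℝ) (xe : Vec n) (ue : Vec m) (lam : Vec n → ℝ) (α : ℝ → ℝ) : Prop :=
  ∀ z ∈ Y, f z ∈ stateSet Y →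
    ℓ z - ℓ (xe, ue) + lam z.1 - lam (f z) ≥ α ‖z.1 - xe‖

/-- Strict pre-dissipativity with a given storage function and `K∞` bound. -/
def StrictPreDissipativeWith {n m : ℕ} (f : Vec n × Vec m → Vec n) (Y : Set (Vec n × Vec m))
    (ℓ : Vec n × Vec m → ℝ) (xe : Vec n) (ue : Vec m) (lam : Vec n → ℝ) (α : ℝ → ℝ) : Prop :=
  (xe, ue) ∈ Y ∧ f (xe, ue) = xe ∧ BddOnBddSubsets (stateSet Y) lam ∧ KInf α ∧
    DissIneq f Y ℓ xe ue lam α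

/-- Strict dissipativity with a given storage function and `K∞` bound. -/
def StrictDissipativeWith {n m : ℕ} (f : Vec n × Vec m → Vec n) (Y : Set (Vec n × Vec m))
    (ℓ : Vec n × Vec m → ℝ) (xe : Vec n) (ue : Vec m) (lam : Vec n → ℝ) (α : ℝ → ℝ) : Prop :=
  StrictPreDissipativeWith f Y ℓ xe ue lam α ∧ BddBelow (lam '' stateSet Y)

/-- Strict dissipativity at an equilibrium. -/
def StrictDissipative {n m : ℕ} (f : Vec n × Vec m → Vec n) (Y : Set (Vec n × Vec m))
    (ℓ : Vec n × Vec m → ℝ) (xe : Vec n) (ue : Vec m) : Prop :=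
  ∃ lam α, StrictDissipativeWith f Y ℓ xe ue lam α


noncomputable def dotCLM {n : ℕ} (a : Vec n) : Vec n →L[ℝ] ℝ :=
  ∑ i, a i • (ContinuousLinearMap.proj i : Vec n →L[ℝ] ℝ)

lemma dotCLM_apply {n : ℕ} (a v : Vec n) : dotCLM a v = a ⬝ᵥ v := by
  simp [dotCLM, dotProduct]

/-- first part of the proof of Theorem 4.6: with the storage function
`λ_μ(x) = μλ₁(x) + (1-μ)λ₂(x) + λ̃_μᵀx`, where `λ̃_μ = ν_μ - μ∇λ₁(xᵉ_μ) - (1-μ)∇λ₂(xᵉ_μ)`,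
one has `∇λ_μ(xᵉ_μ) = ν_μ` and the gradient of the rotated cost `ℓ̃_μ` vanishes at
`(xᵉ_μ,uᵉ_μ)`. -/
theorem stmt14 {n m : ℕ} (f : Vec n × Vec m → Vec n) (hf : ContDiff ℝ 1 f)
    (ℓ₁ ℓ₂ : Vec n × Vec m → ℝ) (hℓ₁ : ContDiff ℝ 1 ℓ₁) (hℓ₂ : ContDiff ℝ 1 ℓ₂)
    (lam₁ lam₂ : Vec n → ℝ) (hlam₁ : ContDiff ℝ 1 lam₁) (hlam₂ : ContDiff ℝ 1 lam₂)
    (μ : ℝ) (hμ : μ ∈ Icc (0 : ℝ) 1)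
    (ℓμ : Vec n × Vec m → ℝ) (hℓμ : ℓμ = fun z => μ * ℓ₁ z + (1 - μ) * ℓ₂ z)
    (xeμ : Vec n) (ueμ : Vec m) (heq : f (xeμ, ueμ) = xeμ)
    (νμ : Vec n)
    (hKKT : fderiv ℝ (fun z : Vec n × Vec m => ℓμ z + νμ ⬝ᵥ (z.1 - f z)) (xeμ, ueμ) = 0)
    (grad₁ grad₂ : Vec n → Vec n)
    (hgrad₁ : ∀ x v, fderiv ℝ lam₁ x v = grad₁ x ⬝ᵥ v)
    (hgrad₂ : ∀ x v, fderiv ℝ lam₂ x v = grad₂ x ⬝ᵥ v)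
    (tlamμ : Vec n) (htlam : tlamμ = νμ - μ • grad₁ xeμ - (1 - μ) • grad₂ xeμ)
    (lamμ : Vec n → ℝ)
    (hlamμ : lamμ = fun x => μ * lam₁ x + (1 - μ) * lam₂ x + tlamμ ⬝ᵥ x)
    (ltμ : Vec n × Vec m → ℝ)
    (hltμ : ltμ = fun z => ℓμ z - ℓμ (xeμ, ueμ) + lamμ z.1 - lamμ (f z)) :
    (∀ v : Vec n, fderiv ℝ lamμ xeμ v = νμ ⬝ᵥ v) ∧
      fderiv ℝ ltμ (xeμ, ueμ) = 0 := by
  -- basic differentiability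
  have hfd : Differentiable ℝ f := hf.differentiable one_ne_zero
  have h1 : HasFDerivAt lam₁ (fderiv ℝ lam₁ xeμ) xeμ :=
    (hlam₁.differentiable one_ne_zero xeμ).hasFDerivAt
  have h2 : HasFDerivAt lam₂ (fderiv ℝ lam₂ xeμ) xeμ :=
    (hlam₂.differentiable one_ne_zero xeμ).hasFDerivAt
  have hdot : HasFDerivAt (fun x : Vec n => tlamμ ⬝ᵥ x) (dotCLM tlamμ) xeμ := by
    have := (dotCLM tlamμ).hasFDerivAt (x := xeμ)
    convert this using 2 with x
    · exact (dotCLM_apply tlamμ x).symm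
  set Dlam : Vec n →L[ℝ] ℝ :=
    μ • fderiv ℝ lam₁ xeμ + (1 - μ) • fderiv ℝ lam₂ xeμ + dotCLM tlamμ with hDlamdef
  have hlamD : HasFDerivAt lamμ Dlam xeμ := by
    rw [hlamμ]
    exact ((h1.const_mul μ).add (h2.const_mul (1 - μ))).add hdot
  have hDlam : ∀ v, Dlam v = νμ ⬝ᵥ v := by
    intro v
    simp only [hDlamdef, ContinuousLinearMap.add_apply, ContinuousLinearMap.smul_apply,
      smul_eq_mul, dotCLM_apply, hgrad₁, hgrad₂, htlam]
    rw [sub_dotProduct, sub_dotProduct, smul_dotProduct,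
      smul_dotProduct, smul_eq_mul, smul_eq_mul]
    ring
  have part1 : ∀ v : Vec n, fderiv ℝ lamμ xeμ v = νμ ⬝ᵥ v := by
    intro v; rw [hlamD.fderiv]; exact hDlam v
  refine ⟨part1, ?_⟩
  -- part 2
  set pt : Vec n × Vec m := (xeμ, ueμ) with hpt
  have hℓμd : Differentiable ℝ ℓμ := by
    rw [hℓμ]
    exact ((hℓ₁.differentiable one_ne_zero).const_mul μ).add
      ((hℓ₂.differentiable one_ne_zero).const_mul (1 - μ))
  set L : (Vec n × Vec m) →L[ℝ] ℝ := fderiv ℝ ℓμ pt with hLdef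
  set F : (Vec n × Vec m) →L[ℝ] Vec n := fderiv ℝ f pt with hFdef
  have hL : HasFDerivAt ℓμ L pt := (hℓμd pt).hasFDerivAt
  have hF : HasFDerivAt f F pt := (hfd pt).hasFDerivAt
  have hsub : HasFDerivAt (fun z : Vec n × Vec m => z.1 - f z)
      (ContinuousLinearMap.fst ℝ (Vec n) (Vec m) - F) pt := (hasFDerivAt_fst).sub hF
  have hg : HasFDerivAt (fun z : Vec n × Vec m => νμ ⬝ᵥ (z.1 - f z))
      ((dotCLM νμ).comp (ContinuousLinearMap.fst ℝ (Vec n) (Vec m) - F)) pt := by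
    have := ((dotCLM νμ).hasFDerivAt (x := (pt.1 - f pt))).comp pt hsub
    have e : (fun z : Vec n × Vec m => νμ ⬝ᵥ (z.1 - f z)) = (dotCLM νμ) ∘ (fun z => z.1 - f z) := by
      funext z; exact (dotCLM_apply νμ _).symm
    rw [e]; exact this
  have hsum : HasFDerivAt (fun z : Vec n × Vec m => ℓμ z + νμ ⬝ᵥ (z.1 - f z))
      (L + (dotCLM νμ).comp (ContinuousLinearMap.fst ℝ (Vec n) (Vec m) - F)) pt := hL.add hg
  have h0 : L + (dotCLM νμ).comp (ContinuousLinearMap.fst ℝ (Vec n) (Vec m) - F) = 0 := by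
    rw [← hsum.fderiv]; exact hKKT
  have hlamD' : HasFDerivAt lamμ Dlam (f pt) := by rw [hpt, heq]; exact hlamD
  have hlt : HasFDerivAt ltμ
      (L + Dlam.comp (ContinuousLinearMap.fst ℝ (Vec n) (Vec m)) - Dlam.comp F) pt := by
    rw [hltμ]
    exact ((hL.sub_const (ℓμ (xeμ, ueμ))).add (hlamD.comp pt hasFDerivAt_fst)).sub
      (hlamD'.comp pt hF)
  rw [hlt.fderiv]
  refine ContinuousLinearMap.ext fun w => ?_
  have h0w := congrFun (congrArg (fun (T : (Vec n × Vec m) →L[ℝ] ℝ) => (T : _ → ℝ)) h0) w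
  simp only [ContinuousLinearMap.add_apply, ContinuousLinearMap.comp_apply,
    ContinuousLinearMap.sub_apply, ContinuousLinearMap.coe_fst', dotCLM_apply,
    ContinuousLinearMap.zero_apply, dotProduct_sub] at h0w ⊢
  rw [hDlam w.1, hDlam (F w)]
  linarith
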